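/- Let P_XY be a probability distribution on 𝒳×𝒴 with P_XY(x,y) > 0 for all (x,y), with 𝒳-marginal P_X, 𝒴-marginal P_Y, and conditional P_{X|Y}(x|y) = P_XY(x,y)/P_Y(y). Fix λ ∈ [0,1], ρ ≥ 0, and a probability distribution Q_Y on 𝒴. For a stochastic kernel Q_{X|Y} (a probability distribution Q_{X|Y}(·|y) on 𝒳 for each y ∈ 𝒴), let Q_X(x) = Σ_y Q_Y(y) Q_{X|Y}(x|y) denote the induced 𝒳-marginal. Then the infimum over all stochastic kernels Q_{X|Y} of Σ_y Q_Y(y) Σ_x Q_{X|Y}(x|y) [ ln( Q_{X|Y}(x|y)/P_{X|Y}(x|y) ) + (ρ+λ) ln(1/P_X(x)) + λ ln Q_{X|Y}(x|y) + ρ ln Q_X(x) ] equals −(1+λ) times the infimum over all probability distributions W on 𝒳 with W(x) > 0 for all x of Σ_y Q_Y(y) ln( Σ_x [ P_{X|Y}(x|y) · P_X(x)^{ρ+λ} · W(x)^{−ρ} ]^{1/(1+λ)} ). (All terms of the form 0·ln 0 are interpreted as 0.) -/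

import Mathlib

open Finset

set_option linter.unusedSectionVars false
set_option linter.unusedVariables false
set_option maxHeartbeats 1000000


/-- A probability distribution on a finite set: nonnegative and summing to 1. -/
def IsProb {α : Type*} [Fintype α] (Q : α → ℝ) : Prop :=
  (∀ a, 0 ≤ Q a) ∧ ∑ a, Q a = 1

/-- Kullback–Leibler divergence `D(Q‖P) = Σ_a Q(a) ln(Q(a)/P(a))`
(with the convention `0 · ln(0/p) = 0`, automatic since `Real.log 0 = 0`
and the term is multiplied by `Q a = 0`). -/
noncomputable def KL {α : Type*} [Fintype α] (Q P : α → ℝ) : ℝ :=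
  ∑ a, Q a * Real.log (Q a / P a)

/-- Shannon entropy `H_Q(X) = -Σ_x Q(x) ln Q(x)` (with `0 ln 0 = 0`). -/
noncomputable def entropy {α : Type*} [Fintype α] (Q : α → ℝ) : ℝ :=
  -∑ a, Q a * Real.log (Q a)

/-- The 𝒳-marginal of a joint distribution on `𝒳 × 𝒴`. -/
noncomputable def margX {𝒳 𝒴 : Type*} [Fintype 𝒴] (Q : 𝒳 × 𝒴 → ℝ) : 𝒳 → ℝ :=
  fun x => ∑ y, Q (x, y)

/-- The 𝒴-marginal of a joint distribution on `𝒳 × 𝒴`. -/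
noncomputable def margY {𝒳 𝒴 : Type*} [Fintype 𝒳] (Q : 𝒳 × 𝒴 → ℝ) : 𝒴 → ℝ :=
  fun y => ∑ x, Q (x, y)

/-- Conditional entropy `H_Q(X|Y) = -Σ_{x,y} Q(x,y) ln(Q(x,y)/Q_Y(y))` (with `0 ln 0 = 0`). -/
noncomputable def condEnt {𝒳 𝒴 : Type*} [Fintype 𝒳] [Fintype 𝒴] (Q : 𝒳 × 𝒴 → ℝ) : ℝ :=
  -∑ x, ∑ y, Q (x, y) * Real.log (Q (x, y) / margY Q y)

lemma pointwise_log (Pxy PY PX Wx QXx Kx l r : ℝ)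
    (hP : 0 < Pxy) (hPY : 0 < PY) (hPX : 0 < PX) (hW : 0 < Wx) (hQX : 0 < QXx)
    (hKpos : 0 < Kx) (h1l : (0:ℝ) < 1 + l) :
    Real.log (Kx / (Pxy / PY)) + (r + l) * Real.log (1 / PX) + l * Real.log Kx
      + r * Real.log QXx
    = (1 + l) * Real.log (Kx / ((Pxy / PY) * PX ^ (r + l) * Wx ^ (-r)) ^ (1 / (1 + l)))
      + r * Real.log (QXx / Wx) := by
  have hbase : (0:ℝ) < (Pxy / PY) * PX ^ (r + l) * Wx ^ (-r) := by
    have := Real.rpow_pos_of_pos hPX (r + l)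
    have := Real.rpow_pos_of_pos hW (-r)
    have := div_pos hP hPY
    positivity
  rw [Real.log_div (ne_of_gt hKpos) (ne_of_gt (Real.rpow_pos_of_pos hbase _)),
      Real.log_rpow hbase,
      Real.log_mul (by positivity) (ne_of_gt (Real.rpow_pos_of_pos hW _)),
      Real.log_mul (ne_of_gt (div_pos hP hPY)) (ne_of_gt (Real.rpow_pos_of_pos hPX _)),
      Real.log_rpow hPX, Real.log_rpow hW,
      Real.log_div (ne_of_gt hKpos) (ne_of_gt (div_pos hP hPY)),
      Real.log_div (ne_of_gt hQX) (ne_of_gt hW),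
      one_div PX, Real.log_inv]
  field_simp
  ring

lemma gibbs {α : Type*} [Fintype α] [Nonempty α] (K B : α → ℝ) (hK : IsProb K)
    (hB : ∀ a, 0 < B a) :
    -Real.log (∑ a, B a) ≤ ∑ a, K a * Real.log (K a / B a) := by
  obtain ⟨hK0, hK1⟩ := hK
  have hS : 0 < ∑ a, B a := Finset.sum_pos (fun a _ => hB a) Finset.univ_nonempty
  set S := ∑ a, B a with hSdef
  have key : ∀ a, K a - B a / S ≤ K a * Real.log (K a / B a) + K a * Real.log S := by
    intro a
    rcases eq_or_lt_of_le (hK0 a) with h0 | h0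
    · rw [← h0]
      have : 0 ≤ B a / S := div_nonneg (hB a).le hS.le
      simp; linarith
    · have hlog : Real.log (B a / (K a * S)) ≤ B a / (K a * S) - 1 :=
        Real.log_le_sub_one_of_pos (div_pos (hB a) (mul_pos h0 hS))
      have hinv : Real.log (K a / B a * S) = -Real.log (B a / (K a * S)) := by
        rw [← Real.log_inv]
        congr 1
        field_simp
      have h2 : 1 - B a / (K a * S) ≤ Real.log (K a / B a * S) := by
        rw [hinv]; linarith
      have h3 := mul_le_mul_of_nonneg_left h2 (le_of_lt h0)
      calc K a - B a / S = K a * (1 - B a / (K a * S)) := by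
            field_simp
        _ ≤ K a * Real.log (K a / B a * S) := h3
        _ = K a * Real.log (K a / B a) + K a * Real.log S := by
            rw [Real.log_mul (ne_of_gt (div_pos h0 (hB a))) (ne_of_gt hS)]; ring
  have hsum := Finset.sum_le_sum (fun a (_ : a ∈ Finset.univ) => key a)
  have e1 : ∑ a, (K a - B a / S) = 0 := by
    rw [Finset.sum_sub_distrib, hK1, ← Finset.sum_div, ← hSdef, div_self (ne_of_gt hS)]
    ring
  have e2 : ∑ a, (K a * Real.log (K a / B a) + K a * Real.log S)
      = (∑ a, K a * Real.log (K a / B a)) + Real.log S := by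
    rw [Finset.sum_add_distrib, ← Finset.sum_mul, hK1, one_mul]
  rw [e1, e2] at hsum
  linarith

section main
variable {𝒳 𝒴 : Type*} [Fintype 𝒳] [Nonempty 𝒳] [Fintype 𝒴] [Nonempty 𝒴]

lemma margY_pos (P : 𝒳 × 𝒴 → ℝ) (hPpos : ∀ p, 0 < P p) (y : 𝒴) : 0 < margY P y :=
  Finset.sum_pos (fun x _ => hPpos (x, y)) Finset.univ_nonempty

lemma margX_pos (P : 𝒳 × 𝒴 → ℝ) (hPpos : ∀ p, 0 < P p) (x : 𝒳) : 0 < margX P x :=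
  Finset.sum_pos (fun y _ => hPpos (x, y)) Finset.univ_nonempty

/-- The function inside the log of the RHS. -/
noncomputable def Bf (P : 𝒳 × 𝒴 → ℝ) (l r : ℝ) (W : 𝒳 → ℝ) (y : 𝒴) (x : 𝒳) : ℝ :=
  ((P (x, y) / margY P y) * margX P x ^ (r + l) * W x ^ (-r)) ^ (1 / (1 + l))

noncomputable def Gf (P : 𝒳 × 𝒴 → ℝ) (l r : ℝ) (QY : 𝒴 → ℝ) (W : 𝒳 → ℝ) : ℝ :=
  ∑ y, QY y * Real.log (∑ x, Bf P l r W y x)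

noncomputable def Ff (P : 𝒳 × 𝒴 → ℝ) (l r : ℝ) (QY : 𝒴 → ℝ) (K : 𝒴 → 𝒳 → ℝ) : ℝ :=
  ∑ y, QY y * ∑ x, K y x *
      (Real.log (K y x / (P (x, y) / margY P y))
        + (r + l) * Real.log (1 / margX P x)
        + l * Real.log (K y x)
        + r * Real.log (∑ y', QY y' * K y' x))

lemma Bf_pos (P : 𝒳 × 𝒴 → ℝ) (hPpos : ∀ p, 0 < P p) (l r : ℝ) (W : 𝒳 → ℝ)
    (hW : ∀ x, 0 < W x) (y : 𝒴) (x : 𝒳) : 0 < Bf P l r W y x := by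
  have h0 := hPpos (x, y)
  have h1 := margY_pos P hPpos y
  have h2 := Real.rpow_pos_of_pos (margX_pos P hPpos x) (r + l)
  have h3 := Real.rpow_pos_of_pos (hW x) (-r)
  exact Real.rpow_pos_of_pos (by positivity) _

lemma marg_prob (QY : 𝒴 → ℝ) (hQY : IsProb QY) (K : 𝒴 → 𝒳 → ℝ) (hK : ∀ y, IsProb (K y)) :
    IsProb (fun x => ∑ y, QY y * K y x) := by
  constructor
  · intro x
    exact Finset.sum_nonneg fun y _ => mul_nonneg (hQY.1 y) ((hK y).1 x)
  · rw [Finset.sum_comm]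
    calc ∑ y, ∑ x, QY y * K y x = ∑ y, QY y * ∑ x, K y x := by
          simp [Finset.mul_sum]
      _ = 1 := by
          simp only [fun y => (hK y).2]
          simpa using hQY.2

/-- Key decomposition identity. -/
lemma decomp (P : 𝒳 × 𝒴 → ℝ) (hPpos : ∀ p, 0 < P p) (l r : ℝ) (hl0 : 0 ≤ l)
    (QY : 𝒴 → ℝ) (hQY : IsProb QY)
    (K : 𝒴 → 𝒳 → ℝ) (hK : ∀ y, IsProb (K y)) (W : 𝒳 → ℝ) (hW : ∀ x, 0 < W x) :
    Ff P l r QY K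
      = (1 + l) * ∑ y, QY y * ∑ x, K y x * Real.log (K y x / Bf P l r W y x)
        + r * ∑ x, (∑ y, QY y * K y x) * Real.log ((∑ y, QY y * K y x) / W x) := by
  have h1l : (0:ℝ) < 1 + l := by linarith
  have hswap : r * ∑ x, (∑ y, QY y * K y x) * Real.log ((∑ y, QY y * K y x) / W x)
      = ∑ y, QY y * ∑ x, K y x * (r * Real.log ((∑ y', QY y' * K y' x) / W x)) := by
    simp only [Finset.mul_sum]
    rw [Finset.sum_comm]
    apply Finset.sum_congr rfl
    intro x _
    have : ∑ y, QY y * (K y x * (r * Real.log ((∑ y', QY y' * K y' x) / W x)))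
        = (∑ y, QY y * K y x) * (r * Real.log ((∑ y', QY y' * K y' x) / W x)) := by
      rw [Finset.sum_mul]
      exact Finset.sum_congr rfl fun y _ => by ring
    rw [this]
    ring
  have hfirst : (1 + l) * ∑ y, QY y * ∑ x, K y x * Real.log (K y x / Bf P l r W y x)
      = ∑ y, QY y * ∑ x, K y x * ((1 + l) * Real.log (K y x / Bf P l r W y x)) := by
    rw [Finset.mul_sum]
    apply Finset.sum_congr rfl
    intro y _
    simp only [Finset.mul_sum]
    exact Finset.sum_congr rfl fun x _ => by ring
  rw [hswap, hfirst, Ff, ← Finset.sum_add_distrib]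
  apply Finset.sum_congr rfl
  intro y _
  rw [← mul_add, ← Finset.sum_add_distrib]
  rcases eq_or_lt_of_le (hQY.1 y) with h0 | h0
  · rw [← h0]; ring
  congr 1
  apply Finset.sum_congr rfl
  intro x _
  rw [← mul_add]
  rcases eq_or_lt_of_le ((hK y).1 x) with hKx | hKx
  · rw [← hKx]; ring
  congr 1
  have hQX : 0 < ∑ y', QY y' * K y' x := by
    have hle : QY y * K y x ≤ ∑ y', QY y' * K y' x :=
      Finset.single_le_sum (f := fun y' => QY y' * K y' x)
        (fun y' _ => mul_nonneg (hQY.1 y') ((hK y').1 x)) (Finset.mem_univ y)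
    exact lt_of_lt_of_le (mul_pos h0 hKx) hle
  exact pointwise_log (P (x, y)) (margY P y) (margX P x) (W x) _ (K y x) l r
    (hPpos (x, y)) (margY_pos P hPpos y) (margX_pos P hPpos x) (hW x) hQX hKx h1l

end main

section main2
variable {𝒳 𝒴 : Type*} [Fintype 𝒳] [Nonempty 𝒳] [Fintype 𝒴] [Nonempty 𝒴]

/-- Lower bound: for every kernel K and positive prob W, F(K) ≥ -(1+l) G(W). -/
lemma lowerBound (P : 𝒳 × 𝒴 → ℝ) (hPpos : ∀ p, 0 < P p) (l r : ℝ) (hl0 : 0 ≤ l) (hr : 0 ≤ r)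
    (QY : 𝒴 → ℝ) (hQY : IsProb QY)
    (K : 𝒴 → 𝒳 → ℝ) (hK : ∀ y, IsProb (K y)) (W : 𝒳 → ℝ) (hWp : IsProb W)
    (hW : ∀ x, 0 < W x) :
    -(1 + l) * Gf P l r QY W ≤ Ff P l r QY K := by
  have h1l : (0:ℝ) < 1 + l := by linarith
  rw [decomp P hPpos l r hl0 QY hQY K hK W hW]
  have hKL : 0 ≤ ∑ x, (∑ y, QY y * K y x) * Real.log ((∑ y, QY y * K y x) / W x) := by
    have hg := gibbs (fun x => ∑ y, QY y * K y x) W (marg_prob QY hQY K hK) hW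
    rw [hWp.2] at hg
    simpa using hg
  have hmain : (1 + l) * (-(Gf P l r QY W))
      ≤ (1 + l) * ∑ y, QY y * ∑ x, K y x * Real.log (K y x / Bf P l r W y x) := by
    apply mul_le_mul_of_nonneg_left _ (le_of_lt h1l)
    rw [Gf, ← Finset.sum_neg_distrib]
    apply Finset.sum_le_sum
    intro y _
    rw [← mul_neg]
    exact mul_le_mul_of_nonneg_left
      (gibbs (K y) (Bf P l r W y) (hK y) (fun x => Bf_pos P hPpos l r W hW y x)) (hQY.1 y)
  nlinarith [mul_nonneg (le_of_lt h1l) hKL, hr, hKL]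

/-- The matched kernel built from W. -/
noncomputable def Kmatch (P : 𝒳 × 𝒴 → ℝ) (l r : ℝ) (W : 𝒳 → ℝ) (y : 𝒴) (x : 𝒳) : ℝ :=
  Bf P l r W y x / ∑ x', Bf P l r W y x'

lemma Kmatch_prob (P : 𝒳 × 𝒴 → ℝ) (hPpos : ∀ p, 0 < P p) (l r : ℝ) (W : 𝒳 → ℝ)
    (hW : ∀ x, 0 < W x) (y : 𝒴) : IsProb (Kmatch P l r W y) := by
  have hZ : 0 < ∑ x', Bf P l r W y x' :=
    Finset.sum_pos (fun x _ => Bf_pos P hPpos l r W hW y x) Finset.univ_nonempty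
  constructor
  · intro x
    exact div_nonneg (le_of_lt (Bf_pos P hPpos l r W hW y x)) (le_of_lt hZ)
  · simp only [Kmatch]
    rw [← Finset.sum_div, div_self (ne_of_gt hZ)]

/-- Value of F at the matched kernel. -/
lemma Ff_Kmatch (P : 𝒳 × 𝒴 → ℝ) (hPpos : ∀ p, 0 < P p) (l r : ℝ) (hl0 : 0 ≤ l)
    (QY : 𝒴 → ℝ) (hQY : IsProb QY) (W : 𝒳 → ℝ) (hW : ∀ x, 0 < W x) :
    Ff P l r QY (Kmatch P l r W)
      = -(1 + l) * Gf P l r QY W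
        + r * ∑ x, (∑ y, QY y * Kmatch P l r W y x)
            * Real.log ((∑ y, QY y * Kmatch P l r W y x) / W x) := by
  rw [decomp P hPpos l r hl0 QY hQY (Kmatch P l r W) (Kmatch_prob P hPpos l r W hW) W hW]
  congr 1
  rw [Gf]
  have hinner : ∀ y, ∑ x, Kmatch P l r W y x * Real.log (Kmatch P l r W y x / Bf P l r W y x)
      = -Real.log (∑ x', Bf P l r W y x') := by
    intro y
    have : ∀ x, Kmatch P l r W y x * Real.log (Kmatch P l r W y x / Bf P l r W y x)
        = Kmatch P l r W y x * (-Real.log (∑ x', Bf P l r W y x')) := by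
      intro x
      congr 1
      have hB := ne_of_gt (Bf_pos P hPpos l r W hW y x)
      have hZ' : ∑ x', Bf P l r W y x' ≠ 0 := ne_of_gt
        (Finset.sum_pos (fun x _ => Bf_pos P hPpos l r W hW y x) Finset.univ_nonempty)
      have heq : Kmatch P l r W y x / Bf P l r W y x = (∑ x', Bf P l r W y x')⁻¹ := by
        rw [Kmatch]; field_simp
      rw [heq, Real.log_inv]
    rw [Finset.sum_congr rfl (fun x _ => this x), ← Finset.sum_mul,
        (Kmatch_prob P hPpos l r W hW y).2, one_mul]
  rw [Finset.sum_congr rfl (fun y (_ : y ∈ Finset.univ) => by rw [hinner y])]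
  have : ∑ y, QY y * -Real.log (∑ x', Bf P l r W y x')
      = -∑ y, QY y * Real.log (∑ x', Bf P l r W y x') := by
    simp [mul_neg]
  rw [this]
  ring

end main2


section min
variable {𝒳 𝒴 : Type*} [Fintype 𝒳] [Nonempty 𝒳] [Fintype 𝒴] [Nonempty 𝒴]

-- abstract version: a : 𝒴 → 𝒳 → ℝ positive coefficients, s > 0, QY prob.
-- g W = ∑_y QY y * log (∑_x a y x * W x ^ (-s))
-- claim: exists prob W > 0 minimizing g over positive probs, with
-- ∀ x₁ x₂, T x₁ = T x₂ where T x = ∑_y QY y * (a y x * W x ^ (-s-1) / Z y)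
lemma exists_min_abstract (a : 𝒴 → 𝒳 → ℝ) (ha : ∀ y x, 0 < a y x) (s : ℝ) (hs : 0 < s)
    (QY : 𝒴 → ℝ) (hQY : IsProb QY) :
    ∃ W : 𝒳 → ℝ, IsProb W ∧ (∀ x, 0 < W x) ∧
      (∀ V : 𝒳 → ℝ, IsProb V → (∀ x, 0 < V x) →
        (∑ y, QY y * Real.log (∑ x, a y x * W x ^ (-s)))
          ≤ ∑ y, QY y * Real.log (∑ x, a y x * V x ^ (-s))) ∧
      (∀ x₁ x₂ : 𝒳,
        (∑ y, QY y * (a y x₁ * W x₁ ^ (-s - 1) / ∑ x, a y x * W x ^ (-s)))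
          = ∑ y, QY y * (a y x₂ * W x₂ ^ (-s - 1) / ∑ x, a y x * W x ^ (-s))) := by
  classical
  set g : (𝒳 → ℝ) → ℝ := fun W => ∑ y, QY y * Real.log (∑ x, a y x * W x ^ (-s)) with hg
  obtain ⟨y₀, hy₀⟩ : ∃ y, 0 < QY y := by
    by_contra h
    push_neg at h
    have : ∑ y, QY y ≤ 0 := Finset.sum_nonpos fun y _ => h y
    rw [hQY.2] at this; linarith
  -- amin
  set amin : ℝ := Finset.univ.inf' Finset.univ_nonempty
    (fun y : 𝒴 => Finset.univ.inf' Finset.univ_nonempty (fun x : 𝒳 => a y x)) with hamin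
  have hamin_le : ∀ y x, amin ≤ a y x := by
    intro y x
    refine le_trans (Finset.inf'_le _ (Finset.mem_univ y)) ?_
    exact Finset.inf'_le _ (Finset.mem_univ x)
  have hamin_pos : 0 < amin := by
    obtain ⟨y, -, hy⟩ := Finset.exists_mem_eq_inf' (s := (Finset.univ : Finset 𝒴))
      Finset.univ_nonempty (fun y : 𝒴 => Finset.univ.inf' Finset.univ_nonempty (fun x : 𝒳 => a y x))
    obtain ⟨x, -, hx⟩ := Finset.exists_mem_eq_inf' (s := (Finset.univ : Finset 𝒳))
      Finset.univ_nonempty (fun x : 𝒳 => a y x)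
    rw [hamin, hy, hx]
    exact ha y x
  set n : ℕ := Fintype.card 𝒳 with hn
  have hnpos : (0:ℝ) < n := by
    have := Fintype.card_pos (α := 𝒳)
    exact_mod_cast this
  set u : 𝒳 → ℝ := fun _ => (n:ℝ)⁻¹ with hu
  have huprob : IsProb u := by
    constructor
    · intro x; positivity
    · simp [hu, Finset.card_univ, hn]
  have hupos : ∀ x, 0 < u x := fun x => by positivity
  set M : ℝ := g u with hM
  set δ : ℝ := min (Real.exp ((Real.log amin - M) / (QY y₀ * s) - 1)) ((n:ℝ)⁻¹) with hδdef
  have hδpos : 0 < δ := lt_min (Real.exp_pos _) (by positivity)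
  have hδn : δ ≤ (n:ℝ)⁻¹ := min_le_right _ _
  have hδlog : QY y₀ * s * Real.log δ < Real.log amin - M := by
    have h1 : Real.log δ ≤ (Real.log amin - M) / (QY y₀ * s) - 1 := by
      calc Real.log δ ≤ Real.log (Real.exp ((Real.log amin - M) / (QY y₀ * s) - 1)) :=
            Real.log_le_log hδpos (min_le_left _ _)
        _ = (Real.log amin - M) / (QY y₀ * s) - 1 := Real.log_exp _
    have hqs : 0 < QY y₀ * s := mul_pos hy₀ hs
    have := mul_le_mul_of_nonneg_left h1 (le_of_lt hqs)
    rw [mul_sub, mul_div_cancel₀ _ (ne_of_gt hqs)] at this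
    nlinarith
  -- basic bounds on Z
  have hZpos : ∀ (V : 𝒳 → ℝ), (∀ x, 0 < V x) → ∀ y, 0 < ∑ x, a y x * V x ^ (-s) := by
    intro V hV y
    exact Finset.sum_pos (fun x _ => mul_pos (ha y x) (Real.rpow_pos_of_pos (hV x) _))
      Finset.univ_nonempty
  have hVle1 : ∀ (V : 𝒳 → ℝ), IsProb V → ∀ x, V x ≤ 1 := by
    intro V hV x
    rw [← hV.2]
    exact Finset.single_le_sum (fun x _ => hV.1 x) (Finset.mem_univ x)
  have hZlb : ∀ (V : 𝒳 → ℝ), IsProb V → (∀ x, 0 < V x) → ∀ y (x' : 𝒳),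
      amin * V x' ^ (-s) ≤ ∑ x, a y x * V x ^ (-s) := by
    intro V hV hVpos y x'
    calc amin * V x' ^ (-s) ≤ a y x' * V x' ^ (-s) :=
          mul_le_mul_of_nonneg_right (hamin_le y x')
            (le_of_lt (Real.rpow_pos_of_pos (hVpos x') _))
      _ ≤ ∑ x, a y x * V x ^ (-s) :=
          Finset.single_le_sum
            (fun x _ => le_of_lt (mul_pos (ha y x) (Real.rpow_pos_of_pos (hVpos x) _)))
            (Finset.mem_univ x')
  have hrpow_ge1 : ∀ (V : 𝒳 → ℝ), IsProb V → (∀ x, 0 < V x) → ∀ x, (1:ℝ) ≤ V x ^ (-s) := by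
    intro V hV hVpos x
    simpa using Real.rpow_le_rpow_of_nonpos (hVpos x) (hVle1 V hV x) (by linarith : -s ≤ 0)
  have hloglb : ∀ (V : 𝒳 → ℝ), IsProb V → (∀ x, 0 < V x) → ∀ y,
      Real.log amin ≤ Real.log (∑ x, a y x * V x ^ (-s)) := by
    intro V hV hVpos y
    apply Real.log_le_log hamin_pos
    inhabit 𝒳
    calc amin = amin * 1 := by ring
      _ ≤ amin * V default ^ (-s) :=
          mul_le_mul_of_nonneg_left (hrpow_ge1 V hV hVpos default) (le_of_lt hamin_pos)
      _ ≤ _ := hZlb V hV hVpos y default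
  -- Claim A : coercivity
  have claimA : ∀ (V : 𝒳 → ℝ), IsProb V → (∀ x, 0 < V x) → ∀ x₀, V x₀ ≤ δ → M < g V := by
    intro V hV hVpos x₀ hVx₀
    have hstep : Real.log amin - s * Real.log δ ≤ Real.log (∑ x, a y₀ x * V x ^ (-s)) := by
      have h1 : amin * δ ^ (-s) ≤ ∑ x, a y₀ x * V x ^ (-s) := by
        refine le_trans ?_ (hZlb V hV hVpos y₀ x₀)
        apply mul_le_mul_of_nonneg_left _ (le_of_lt hamin_pos)
        exact Real.rpow_le_rpow_of_nonpos (hVpos x₀) hVx₀ (by linarith)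
      calc Real.log amin - s * Real.log δ = Real.log (amin * δ ^ (-s)) := by
            rw [Real.log_mul (ne_of_gt hamin_pos) (ne_of_gt (Real.rpow_pos_of_pos hδpos _)),
                Real.log_rpow hδpos]
            ring
        _ ≤ _ := Real.log_le_log (mul_pos hamin_pos (Real.rpow_pos_of_pos hδpos _)) h1
    have hgV : Real.log amin + QY y₀ * (- s * Real.log δ) ≤ g V := by
      have hsplit : g V = ∑ y, QY y * Real.log amin
          + ∑ y, QY y * (Real.log (∑ x, a y x * V x ^ (-s)) - Real.log amin) := by
        rw [← Finset.sum_add_distrib]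
        apply Finset.sum_congr rfl
        intro y _
        ring
      have h2 : ∑ y, QY y * Real.log amin = Real.log amin := by
        rw [← Finset.sum_mul, hQY.2, one_mul]
      have h3 : QY y₀ * (- s * Real.log δ)
          ≤ ∑ y, QY y * (Real.log (∑ x, a y x * V x ^ (-s)) - Real.log amin) := by
        refine le_trans ?_ (Finset.single_le_sum
          (f := fun y => QY y * (Real.log (∑ x, a y x * V x ^ (-s)) - Real.log amin))
          (fun y _ => mul_nonneg (hQY.1 y) (by linarith [hloglb V hV hVpos y]))
          (Finset.mem_univ y₀))
        apply mul_le_mul_of_nonneg_left _ (le_of_lt hy₀)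
        linarith [hstep]
      rw [hsplit, h2]
      linarith
    nlinarith [hgV, hδlog]
  -- the compact set
  set Δs : Set (𝒳 → ℝ) := {W | (∀ x, δ ≤ W x) ∧ ∑ x, W x = 1} with hΔs
  have hΔclosed : IsClosed Δs := by
    have h1 : IsClosed {W : 𝒳 → ℝ | ∀ x, δ ≤ W x} := by
      have : {W : 𝒳 → ℝ | ∀ x, δ ≤ W x} = ⋂ x, {W : 𝒳 → ℝ | δ ≤ W x} := by
        ext W; simp
      rw [this]
      exact isClosed_iInter fun x => isClosed_le continuous_const (continuous_apply x)
    have h2 : IsClosed {W : 𝒳 → ℝ | ∑ x, W x = 1} :=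
      isClosed_eq (by continuity) continuous_const
    exact (h1.inter h2)
  have hΔcompact : IsCompact Δs := by
    apply IsCompact.of_isClosed_subset (isCompact_univ_pi (fun _ : 𝒳 => isCompact_Icc
      (a := δ) (b := 1))) hΔclosed
    intro W hW
    simp only [Set.mem_pi, Set.mem_univ, forall_true_left, Set.mem_Icc]
    intro x
    refine ⟨hW.1 x, ?_⟩
    rw [← hW.2]
    exact Finset.single_le_sum (fun x' _ => le_trans (le_of_lt hδpos) (hW.1 x'))
      (Finset.mem_univ x)
  have huΔ : u ∈ Δs := by
    constructor
    · intro x; exact hδn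
    · exact huprob.2
  have hΔpos : ∀ W ∈ Δs, ∀ x, 0 < W x := fun W hW x => lt_of_lt_of_le hδpos (hW.1 x)
  have hgcont : ContinuousOn g Δs := by
    apply continuousOn_finset_sum
    intro y _
    apply ContinuousOn.mul continuousOn_const
    apply ContinuousOn.log
    · apply continuousOn_finset_sum
      intro x _
      apply ContinuousOn.mul continuousOn_const
      exact ContinuousOn.rpow_const (continuous_apply x).continuousOn
        (fun W hW => Or.inl (ne_of_gt (hΔpos W hW x)))
    · intro W hW
      have : IsProb W := ⟨fun x => le_of_lt (hΔpos W hW x), hW.2⟩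
      exact ne_of_gt (hZpos W (hΔpos W hW) y)
  obtain ⟨W, hWΔ, hWmin⟩ := hΔcompact.exists_isMinOn ⟨u, huΔ⟩ hgcont
  have hWpos : ∀ x, 0 < W x := hΔpos W hWΔ
  have hWprob : IsProb W := ⟨fun x => le_of_lt (hWpos x), hWΔ.2⟩
  have hWM : g W ≤ M := hWmin huΔ
  have hglobal : ∀ V : 𝒳 → ℝ, IsProb V → (∀ x, 0 < V x) → g W ≤ g V := by
    intro V hV hVpos
    by_cases hcase : ∀ x, δ ≤ V x
    · exact hWmin ⟨hcase, hV.2⟩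
    · push_neg at hcase
      obtain ⟨x₀, hx₀⟩ := hcase
      have := claimA V hV hVpos x₀ (le_of_lt hx₀)
      linarith
  have hWint : ∀ x, δ < W x := by
    intro x
    rcases lt_or_ge δ (W x) with h | h
    · exact h
    · exfalso
      have := claimA W hWprob hWpos x h
      linarith
  refine ⟨W, hWprob, hWpos, hglobal, ?_⟩
  -- stationarity
  intro x₁ x₂
  by_cases hx12 : x₁ = x₂
  · rw [hx12]
  set ε : 𝒳 → ℝ := fun x => (if x = x₁ then (1:ℝ) else 0) - (if x = x₂ then 1 else 0) with hε
  have hεsum : ∑ x, ε x = 0 := by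
    simp [hε, Finset.sum_sub_distrib]
  have hεbound : ∀ x, |ε x| ≤ 1 := by
    intro x
    rw [hε]
    dsimp only
    split_ifs <;> norm_num
  set φ : ℝ → ℝ := fun t => g (fun x => W x + t * ε x) with hφ
  have hδ' : 0 < δ := hδpos
  have hlocmin : IsLocalMin φ 0 := by
    have hev : ∀ᶠ t in nhds (0:ℝ), t ∈ Set.Ioo (-δ) δ := Ioo_mem_nhds (by linarith) hδpos
    apply Filter.Eventually.mono hev
    intro t ht
    have htabs : |t| < δ := abs_lt.mpr ⟨ht.1, ht.2⟩
    have hVpos : ∀ x, 0 < W x + t * ε x := by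
      intro x
      have h1 : |t * ε x| ≤ |t| := by
        rw [abs_mul]
        calc |t| * |ε x| ≤ |t| * 1 := mul_le_mul_of_nonneg_left (hεbound x) (abs_nonneg t)
          _ = |t| := mul_one _
      have h2 : -(|t|) ≤ t * ε x := neg_le_of_abs_le h1 |>.trans_eq rfl
      have := hWint x
      nlinarith [abs_nonneg (t * ε x), neg_abs_le (t * ε x)]
    have hVprob : IsProb (fun x => W x + t * ε x) := by
      constructor
      · exact fun x => le_of_lt (hVpos x)
      · rw [Finset.sum_add_distrib, hWprob.2, ← Finset.mul_sum, hεsum]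
        ring
    have := hglobal _ hVprob hVpos
    simpa [hφ] using this
  -- derivative of φ at 0
  set Z : 𝒴 → ℝ := fun y => ∑ x, a y x * W x ^ (-s) with hZ
  have hZp : ∀ y, 0 < Z y := fun y => hZpos W hWpos y
  have hderiv : HasDerivAt φ
      (∑ y, QY y * ((∑ x, a y x * (-s * W x ^ (-s - 1) * ε x)) / Z y)) 0 := by
    apply HasDerivAt.fun_sum
    intro y _
    apply HasDerivAt.const_mul
    have hinner : HasDerivAt (fun t => ∑ x, a y x * (W x + t * ε x) ^ (-s))
        (∑ x, a y x * (-s * W x ^ (-s - 1) * ε x)) 0 := by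
      apply HasDerivAt.fun_sum
      intro x _
      apply HasDerivAt.const_mul
      have h1 : HasDerivAt (fun t : ℝ => W x + t * ε x) (ε x) 0 := by
        simpa using (hasDerivAt_mul_const (ε x)).const_add (W x)
      have h2 : HasDerivAt (fun u : ℝ => u ^ (-s)) (-s * W x ^ (-s - 1)) (W x) :=
        Real.hasDerivAt_rpow_const (Or.inl (ne_of_gt (hWpos x)))
      have h2' : HasDerivAt (fun u : ℝ => u ^ (-s)) (-s * W x ^ (-s - 1)) (W x + 0 * ε x) := by
        simpa using h2
      simpa [Function.comp_def] using h2'.comp 0 h1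
    have hne : (∑ x, a y x * (W x + 0 * ε x) ^ (-s)) ≠ 0 := by
      simpa using ne_of_gt (hZp y)
    have := hinner.log hne
    simpa [hZ] using this
  have hzero := hlocmin.hasDerivAt_eq_zero hderiv
  -- simplify
  have hsum_eps : ∀ (f : 𝒳 → ℝ), ∑ x, f x * ε x = f x₁ - f x₂ := by
    intro f
    simp only [hε, mul_sub, mul_ite, mul_one, mul_zero, Finset.sum_sub_distrib]
    rw [Finset.sum_ite_eq' Finset.univ x₁ f, Finset.sum_ite_eq' Finset.univ x₂ f]
    simp
  have hexpand : ∀ y, (∑ x, a y x * (-s * W x ^ (-s - 1) * ε x))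
      = -s * (a y x₁ * W x₁ ^ (-s - 1) - a y x₂ * W x₂ ^ (-s - 1)) := by
    intro y
    have h' : ∀ x, a y x * (-s * W x ^ (-s - 1) * ε x)
        = (fun x => -s * (a y x * W x ^ (-s - 1))) x * ε x := by
      intro x; ring
    rw [Finset.sum_congr rfl (fun x (_ : x ∈ Finset.univ) => h' x),
        hsum_eps (fun x => -s * (a y x * W x ^ (-s - 1)))]
    ring
  have hfinal : ∑ y, QY y * ((∑ x, a y x * (-s * W x ^ (-s - 1) * ε x)) / Z y)
      = -s * ((∑ y, QY y * (a y x₁ * W x₁ ^ (-s - 1) / Z y))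
              - ∑ y, QY y * (a y x₂ * W x₂ ^ (-s - 1) / Z y)) := by
    rw [Finset.sum_congr rfl (fun y (_ : y ∈ Finset.univ) => by rw [hexpand y]),
        ← Finset.sum_sub_distrib, Finset.mul_sum]
    apply Finset.sum_congr rfl
    intro y _
    ring
  rw [hfinal] at hzero
  have hs' : (-s) ≠ 0 := by linarith
  have := mul_eq_zero.mp hzero
  rcases this with h | h
  · exact absurd h hs'
  · linarith [sub_eq_zero.mp h]
end min


section glue
variable {𝒳 𝒴 : Type*} [Fintype 𝒳] [Nonempty 𝒳] [Fintype 𝒴] [Nonempty 𝒴]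

noncomputable def af (P : 𝒳 × 𝒴 → ℝ) (l r : ℝ) (y : 𝒴) (x : 𝒳) : ℝ :=
  ((P (x, y) / margY P y) * margX P x ^ (r + l)) ^ (1 / (1 + l))

lemma af_pos (P : 𝒳 × 𝒴 → ℝ) (hPpos : ∀ p, 0 < P p) (l r : ℝ) (y : 𝒴) (x : 𝒳) :
    0 < af P l r y x := by
  have h0 := hPpos (x, y)
  have h1 := margY_pos P hPpos y
  have h2 := Real.rpow_pos_of_pos (margX_pos P hPpos x) (r + l)
  exact Real.rpow_pos_of_pos (by positivity) _

lemma Bf_eq_af (P : 𝒳 × 𝒴 → ℝ) (hPpos : ∀ p, 0 < P p) (l r : ℝ) (hl0 : 0 ≤ l)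
    (W : 𝒳 → ℝ) (hW : ∀ x, 0 < W x) (y : 𝒴) (x : 𝒳) :
    Bf P l r W y x = af P l r y x * W x ^ (-(r / (1 + l))) := by
  have h1l : (0:ℝ) < 1 + l := by linarith
  have hA : 0 ≤ (P (x, y) / margY P y) * margX P x ^ (r + l) := by
    have h0 := hPpos (x, y)
    have h1 := margY_pos P hPpos y
    have h2 := Real.rpow_pos_of_pos (margX_pos P hPpos x) (r + l)
    positivity
  rw [Bf, af, Real.mul_rpow hA (le_of_lt (Real.rpow_pos_of_pos (hW x) _))]
  congr 1
  rw [← Real.rpow_mul (le_of_lt (hW x)) (-r) (1 / (1 + l))]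
  have he : -r * (1 / (1 + l)) = -(r / (1 + l)) := by ring
  rw [he]

lemma exists_min_fixed (P : 𝒳 × 𝒴 → ℝ) (hPpos : ∀ p, 0 < P p) (l r : ℝ) (hl0 : 0 ≤ l)
    (hr : 0 < r) (QY : 𝒴 → ℝ) (hQY : IsProb QY) :
    ∃ W : 𝒳 → ℝ, IsProb W ∧ (∀ x, 0 < W x) ∧
      (∀ x, ∑ y, QY y * Kmatch P l r W y x = W x) := by
  have h1l : (0:ℝ) < 1 + l := by linarith
  have hs : 0 < r / (1 + l) := div_pos hr h1l
  obtain ⟨W, hWprob, hWpos, hWmin, hWstat⟩ :=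
    exists_min_abstract (af P l r) (af_pos P hPpos l r) (r / (1 + l)) hs QY hQY
  refine ⟨W, hWprob, hWpos, ?_⟩
  set s : ℝ := r / (1 + l) with hsdef
  set Z : 𝒴 → ℝ := fun y => ∑ x, af P l r y x * W x ^ (-s) with hZ
  have hZpos : ∀ y, 0 < Z y := fun y =>
    Finset.sum_pos (fun x _ => mul_pos (af_pos P hPpos l r y x)
      (Real.rpow_pos_of_pos (hWpos x) _)) Finset.univ_nonempty
  have hBsum : ∀ y, ∑ x', Bf P l r W y x' = Z y := by
    intro y
    exact Finset.sum_congr rfl fun x _ => Bf_eq_af P hPpos l r hl0 W hWpos y x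
  set T : 𝒳 → ℝ := fun x => ∑ y, QY y * (af P l r y x * W x ^ (-s - 1) / Z y) with hT
  have hQeq : ∀ x, (∑ y, QY y * Kmatch P l r W y x) = W x * T x := by
    intro x
    rw [hT, Finset.mul_sum]
    apply Finset.sum_congr rfl
    intro y _
    rw [Kmatch, hBsum y, Bf_eq_af P hPpos l r hl0 W hWpos y x]
    have hWx : W x ^ (-s) = W x ^ (-s - 1) * W x := by
      have h' : W x ^ (-s) = W x ^ (-s - 1 + 1) := by norm_num
      rw [h', Real.rpow_add (hWpos x), Real.rpow_one]
    rw [hWx]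
    field_simp
  have hTconst : ∀ x x', T x = T x' := fun x x' => hWstat x x'
  have hsum1 : ∑ x, (∑ y, QY y * Kmatch P l r W y x) = 1 :=
    (marg_prob QY hQY (Kmatch P l r W) (Kmatch_prob P hPpos l r W hWpos)).2
  intro x
  have hT1 : T x = 1 := by
    have : ∑ x', W x' * T x' = 1 := by
      rw [← hsum1]
      exact Finset.sum_congr rfl fun x' _ => (hQeq x').symm
    have h2 : ∑ x', W x' * T x' = T x := by
      calc ∑ x', W x' * T x' = ∑ x', W x' * T x := by
            exact Finset.sum_congr rfl fun x' _ => by rw [hTconst x' x]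
        _ = (∑ x', W x') * T x := by rw [Finset.sum_mul]
        _ = T x := by rw [hWprob.2, one_mul]
    linarith
  rw [hQeq x, hT1, mul_one]

end glue

section final
variable {𝒳 𝒴 : Type*} [Fintype 𝒳] [Nonempty 𝒳] [Fintype 𝒴] [Nonempty 𝒴]

lemma uniform_prob : IsProb (fun _ : 𝒳 => ((Fintype.card 𝒳 : ℝ))⁻¹) := by
  have h : (0:ℝ) < (Fintype.card 𝒳 : ℝ) := by exact_mod_cast Fintype.card_pos
  constructor
  · intro x; positivity
  · simp [Finset.card_univ]

lemma uniform_pos : ∀ x : 𝒳, 0 < (fun _ : 𝒳 => ((Fintype.card 𝒳 : ℝ))⁻¹) x := by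
  intro x
  have h : (0:ℝ) < (Fintype.card 𝒳 : ℝ) := by exact_mod_cast Fintype.card_pos
  positivity

theorem stmt_14' (P : 𝒳 × 𝒴 → ℝ) (hP : IsProb P) (hPpos : ∀ p, 0 < P p)
    (l r : ℝ) (hl0 : 0 ≤ l) (hl1 : l ≤ 1) (hr : 0 ≤ r)
    (QY : 𝒴 → ℝ) (hQY : IsProb QY) :
    sInf {v | ∃ K : 𝒴 → 𝒳 → ℝ, (∀ y, IsProb (K y)) ∧ v = Ff P l r QY K}
      = -(1 + l) * sInf {u | ∃ W : 𝒳 → ℝ, IsProb W ∧ (∀ x, 0 < W x) ∧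
          u = Gf P l r QY W} := by
  classical
  have h1l : (0:ℝ) < 1 + l := by linarith
  set L := {v | ∃ K : 𝒴 → 𝒳 → ℝ, (∀ y, IsProb (K y)) ∧ v = Ff P l r QY K} with hL
  set R := {u | ∃ W : 𝒳 → ℝ, IsProb W ∧ (∀ x, 0 < W x) ∧ u = Gf P l r QY W} with hR
  set Ku : 𝒴 → 𝒳 → ℝ := fun _ _ => ((Fintype.card 𝒳 : ℝ))⁻¹ with hKu
  have hKuprob : ∀ y, IsProb (Ku y) := fun _ => uniform_prob
  set v₀ : ℝ := Ff P l r QY Ku with hv₀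
  have hv₀L : v₀ ∈ L := ⟨Ku, hKuprob, rfl⟩
  have hLne : L.Nonempty := ⟨v₀, hv₀L⟩
  set Wu : 𝒳 → ℝ := fun _ => ((Fintype.card 𝒳 : ℝ))⁻¹ with hWu
  have hRne : R.Nonempty := ⟨Gf P l r QY Wu, Wu, uniform_prob, uniform_pos, rfl⟩
  have hvlow : ∀ v ∈ L, ∀ u ∈ R, -(1 + l) * u ≤ v := by
    rintro v ⟨K, hK, rfl⟩ u ⟨W, hWprob, hWpos, rfl⟩
    exact lowerBound P hPpos l r hl0 hr QY hQY K hK W hWprob hWpos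
  have hRbdd : BddBelow R := by
    refine ⟨(-v₀) / (1 + l), ?_⟩
    intro u hu
    rw [div_le_iff₀ h1l]
    have := hvlow v₀ hv₀L u hu
    linarith
  have hlow : ∀ v ∈ L, -(1 + l) * sInf R ≤ v := by
    intro v hv
    have h1 : (-v) / (1 + l) ≤ sInf R := by
      apply le_csInf hRne
      intro u hu
      rw [div_le_iff₀ h1l]
      have := hvlow v hv u hu
      linarith
    have h2 := mul_le_mul_of_nonneg_left h1 (le_of_lt h1l)
    have h3 : (1 + l) * ((-v) / (1 + l)) = -v := by field_simp
    rw [h3] at h2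
    linarith
  have hLbdd : BddBelow L := ⟨-(1 + l) * sInf R, fun v hv => hlow v hv⟩
  have hge : -(1 + l) * sInf R ≤ sInf L := le_csInf hLne hlow
  -- upper bound
  obtain ⟨W, hWprob, hWpos, hWzero⟩ : ∃ W : 𝒳 → ℝ, IsProb W ∧ (∀ x, 0 < W x) ∧
      r * ∑ x, (∑ y, QY y * Kmatch P l r W y x)
        * Real.log ((∑ y, QY y * Kmatch P l r W y x) / W x) = 0 := by
    rcases eq_or_lt_of_le hr with hr0 | hrpos
    · exact ⟨Wu, uniform_prob, uniform_pos, by rw [← hr0]; ring⟩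
    · obtain ⟨W, hWprob, hWpos, hfix⟩ := exists_min_fixed P hPpos l r hl0 hrpos QY hQY
      refine ⟨W, hWprob, hWpos, ?_⟩
      have : ∀ x, (∑ y, QY y * Kmatch P l r W y x)
          * Real.log ((∑ y, QY y * Kmatch P l r W y x) / W x) = 0 := by
        intro x
        rw [hfix x, div_self (ne_of_gt (hWpos x)), Real.log_one, mul_zero]
      rw [Finset.sum_congr rfl (fun x (_ : x ∈ Finset.univ) => this x)]
      simp
  have hveq : Ff P l r QY (Kmatch P l r W) = -(1 + l) * Gf P l r QY W := by
    rw [Ff_Kmatch P hPpos l r hl0 QY hQY W hWpos, hWzero]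
    ring
  have hvL : Ff P l r QY (Kmatch P l r W) ∈ L :=
    ⟨Kmatch P l r W, Kmatch_prob P hPpos l r W hWpos, rfl⟩
  have hGR : Gf P l r QY W ∈ R := ⟨W, hWprob, hWpos, rfl⟩
  have hInfR : sInf R ≤ Gf P l r QY W := csInf_le hRbdd hGR
  have hInfL : sInf L ≤ Ff P l r QY (Kmatch P l r W) := csInf_le hLbdd hvL
  have hle : sInf L ≤ -(1 + l) * sInf R := by
    have : -(1 + l) * Gf P l r QY W ≤ -(1 + l) * sInf R := by
      nlinarith [mul_nonneg (le_of_lt h1l) (sub_nonneg.2 hInfR)]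
    rw [hveq] at hInfL
    linarith
  linarith

end final

/-- the inner-most minimization over the kernel `Q_{X|Y}`, introducing
the auxiliary distribution `W`. -/
theorem stmt_14 {𝒳 𝒴 : Type*} [Fintype 𝒳] [Nonempty 𝒳] [Fintype 𝒴] [Nonempty 𝒴]
    (P : 𝒳 × 𝒴 → ℝ) (hP : IsProb P) (hPpos : ∀ p, 0 < P p)
    (l r : ℝ) (hl0 : 0 ≤ l) (hl1 : l ≤ 1) (hr : 0 ≤ r)
    (QY : 𝒴 → ℝ) (hQY : IsProb QY) :
    sInf {v | ∃ K : 𝒴 → 𝒳 → ℝ, (∀ y, IsProb (K y)) ∧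
        v = ∑ y, QY y * ∑ x, K y x *
            (Real.log (K y x / (P (x, y) / margY P y))
              + (r + l) * Real.log (1 / margX P x)
              + l * Real.log (K y x)
              + r * Real.log (∑ y', QY y' * K y' x))}
      = -(1 + l) * sInf {u | ∃ W : 𝒳 → ℝ, IsProb W ∧ (∀ x, 0 < W x) ∧
          u = ∑ y, QY y * Real.log (∑ x,
              ((P (x, y) / margY P y) * margX P x ^ (r + l) * W x ^ (-r))
                ^ (1 / (1 + l)))} := by
  have h := stmt_14' P hP hPpos l r hl0 hl1 hr QY hQY
  simp only [Ff, Gf, Bf] at h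
  exact h
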